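/- Let L : ℝ × ℝ^n × ℝ^n → ℝ be C², 0 < α ≤ 1, a < t, and q : [a,t] → ℝ^n be C². If q is a critical point of the functional I[q] = (1/Γ(α)) ∫_a^t L(θ, q(θ), q'(θ)) (t−θ)^{α−1} dθ (i.e., the first variation vanishes for all C² variations h with h(a) = h(t) = 0), then q satisfies the fractional Euler–Lagrange equation ∂₂L(θ,q(θ),q'(θ)) − d/dθ [∂₃L(θ,q(θ),q'(θ))] = ((1−α)/(t−θ)) ∂₃L(θ,q(θ),q'(θ)) for all θ ∈ (a,t). -/

import Mathlib

open Real

open MeasureTheory Set Metric InnerProductSpace intervalIntegral RealInnerProductSpace Topology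

variable {n : ℕ}

noncomputable def J2 (n : ℕ) : EuclideanSpace ℝ (Fin n) →L[ℝ] ℝ × EuclideanSpace ℝ (Fin n) × EuclideanSpace ℝ (Fin n) :=
  (0 : EuclideanSpace ℝ (Fin n) →L[ℝ] ℝ).prod ((ContinuousLinearMap.id ℝ _).prod 0)

noncomputable def J3 (n : ℕ) : EuclideanSpace ℝ (Fin n) →L[ℝ] ℝ × EuclideanSpace ℝ (Fin n) × EuclideanSpace ℝ (Fin n) :=
  (0 : EuclideanSpace ℝ (Fin n) →L[ℝ] ℝ).prod ((0 : _ →L[ℝ] EuclideanSpace ℝ (Fin n)).prod (ContinuousLinearMap.id ℝ _))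

lemma slice2_hasGradientAt (L : ℝ × EuclideanSpace ℝ (Fin n) × EuclideanSpace ℝ (Fin n) → ℝ)
    (hL : Differentiable ℝ L) (s : ℝ) (y w : EuclideanSpace ℝ (Fin n)) :
    HasGradientAt (fun x => L (s, x, w))
      ((toDual ℝ _).symm ((fderiv ℝ L (s, y, w)).comp (J2 n))) y := by
  have hA : HasFDerivAt (fun x : EuclideanSpace ℝ (Fin n) => ((s, x, w) : ℝ × _ × _)) (J2 n) y := by
    have h0 : (fun x : EuclideanSpace ℝ (Fin n) => ((s, x, w) : ℝ × _ × _))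
        = fun x => ((s, 0, w) : ℝ × _ × _) + (J2 n) x := by
      funext x
      simp [J2, Prod.ext_iff]
    rw [h0]
    exact ((J2 n).hasFDerivAt).const_add _
  exact ((hL _).hasFDerivAt.comp y hA).hasGradientAt

lemma slice3_hasGradientAt (L : ℝ × EuclideanSpace ℝ (Fin n) × EuclideanSpace ℝ (Fin n) → ℝ)
    (hL : Differentiable ℝ L) (s : ℝ) (y w : EuclideanSpace ℝ (Fin n)) :
    HasGradientAt (fun v => L (s, y, v))
      ((toDual ℝ _).symm ((fderiv ℝ L (s, y, w)).comp (J3 n))) w := by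
  have hA : HasFDerivAt (fun v : EuclideanSpace ℝ (Fin n) => ((s, y, v) : ℝ × _ × _)) (J3 n) w := by
    have h0 : (fun v : EuclideanSpace ℝ (Fin n) => ((s, y, v) : ℝ × _ × _))
        = fun v => ((s, y, 0) : ℝ × _ × _) + (J3 n) v := by
      funext v
      simp [J3, Prod.ext_iff]
    rw [h0]
    exact ((J3 n).hasFDerivAt).const_add _
  exact ((hL _).hasFDerivAt.comp w hA).hasGradientAt


lemma weight_intervalIntegrable {α a t : ℝ} (hα0 : 0 < α) :
    IntervalIntegrable (fun θ => (t - θ) ^ (α - 1)) volume a t := by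
  have h1 : IntervalIntegrable (fun x : ℝ => x ^ (α - 1)) volume 0 (t - a) :=
    intervalIntegrable_rpow' (by linarith)
  have h2 := h1.comp_sub_left t
  simpa using h2.symm

lemma first_variation {n : ℕ}
    (L : ℝ × EuclideanSpace ℝ (Fin n) × EuclideanSpace ℝ (Fin n) → ℝ)
    (hL : ContDiff ℝ 2 L)
    (α a t : ℝ) (hα0 : 0 < α) (hat : a < t)
    (q h : ℝ → EuclideanSpace ℝ (Fin n)) (hq : ContDiff ℝ 2 q) (hh : ContDiff ℝ 2 h) :
    HasDerivAt (fun ε : ℝ => ∫ θ in a..t,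
        L (θ, q θ + ε • h θ, deriv q θ + ε • deriv h θ) * (t - θ) ^ (α - 1))
      (∫ θ in a..t,
        (fderiv ℝ L (θ, q θ, deriv q θ)) (0, h θ, deriv h θ) * (t - θ) ^ (α - 1)) 0
    ∧ IntervalIntegrable
        (fun θ => (fderiv ℝ L (θ, q θ, deriv q θ)) (0, h θ, deriv h θ) * (t - θ) ^ (α - 1))
        volume a t := by
  have hL1 : Differentiable ℝ L := hL.differentiable two_ne_zero
  have hfd : Continuous (fderiv ℝ L) := (hL.fderiv_right (m := 1) (by norm_num)).continuous
  have hdq : Continuous (deriv q) := hq.continuous_deriv one_le_two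
  have hdh : Continuous (deriv h) := hh.continuous_deriv one_le_two
  -- weight
  set F : ℝ → ℝ := fun θ => (t - θ) ^ (α - 1) with hF
  have hFint : IntervalIntegrable F volume a t := weight_intervalIntegrable hα0
  have hFmeas : AEStronglyMeasurable F (volume.restrict (Set.uIoc a t)) :=
    (intervalIntegrable_iff.mp hFint).aestronglyMeasurable
  have hFnn : ∀ θ ∈ Set.uIoc a t, 0 ≤ F θ := by
    intro θ hθ
    rw [uIoc_of_le hat.le] at hθ
    exact Real.rpow_nonneg (by linarith [hθ.2]) _
  -- the two-parameter map
  set Φ : ℝ × ℝ → ℝ × EuclideanSpace ℝ (Fin n) × EuclideanSpace ℝ (Fin n) :=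
    fun p => (p.1, q p.1 + p.2 • h p.1, deriv q p.1 + p.2 • deriv h p.1) with hΦ
  have hΦc : Continuous Φ := by
    apply Continuous.prodMk continuous_fst
    apply Continuous.prodMk
    · exact (hq.continuous.comp continuous_fst).add
        (continuous_snd.smul (hh.continuous.comp continuous_fst))
    · exact (hdq.comp continuous_fst).add (continuous_snd.smul (hdh.comp continuous_fst))
  have hKc : IsCompact (Φ '' (uIcc a t ×ˢ Icc (-1 : ℝ) 1)) :=
    (isCompact_uIcc.prod isCompact_Icc).image hΦc
  obtain ⟨M, hM⟩ := hKc.exists_bound_of_continuousOn hfd.continuousOn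
  have hvc : Continuous fun θ => ((0 : ℝ), h θ, deriv h θ) :=
    continuous_const.prodMk (hh.continuous.prodMk hdh)
  obtain ⟨M2, hM2⟩ := (isCompact_uIcc (a := a) (b := t)).exists_bound_of_continuousOn
    (f := fun θ => ((0 : ℝ), h θ, deriv h θ)) hvc.continuousOn
  set C : ℝ := max M 0 * max M2 0 with hC
  -- derivative pointwise
  have hdiff : ∀ θ : ℝ, ∀ ε : ℝ,
      HasDerivAt (fun ε : ℝ => L (Φ (θ, ε)) * F θ)
        ((fderiv ℝ L (Φ (θ, ε))) (0, h θ, deriv h θ) * F θ) ε := by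
    intro θ ε
    have hγ : HasDerivAt (fun ε : ℝ => Φ (θ, ε)) (0, h θ, deriv h θ) ε := by
      refine HasDerivAt.prodMk (hasDerivAt_const _ _) (HasDerivAt.prodMk ?_ ?_)
      · simpa using ((hasDerivAt_id ε).smul_const (h θ)).const_add (q θ)
      · simpa using ((hasDerivAt_id ε).smul_const (deriv h θ)).const_add (deriv q θ)
    exact ((hL1 _).hasFDerivAt.comp_hasDerivAt ε hγ).mul_const _
  -- dominated differentiation
  have key := intervalIntegral.hasDerivAt_integral_of_dominated_loc_of_deriv_le
    (𝕜 := ℝ) (μ := volume) (a := a) (b := t)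
    (F := fun ε θ => L (Φ (θ, ε)) * F θ)
    (F' := fun ε θ => (fderiv ℝ L (Φ (θ, ε))) (0, h θ, deriv h θ) * F θ)
    (x₀ := (0 : ℝ)) (bound := fun θ => C * F θ) (Metric.ball_mem_nhds (0:ℝ) one_pos)
    (Filter.Eventually.of_forall fun ε => (((hL.continuous).comp
      (hΦc.comp (continuous_id.prodMk continuous_const))).aestronglyMeasurable).mul hFmeas)
    (hFint.continuousOn_mul ((hL.continuous.comp
      (hΦc.comp (continuous_id.prodMk continuous_const))).continuousOn))
    ((((hfd.comp (hΦc.comp (continuous_id.prodMk continuous_const))).clm_apply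
      hvc).aestronglyMeasurable).mul hFmeas)
    ?_ (hFint.const_mul C)
    (Filter.Eventually.of_forall fun θ _ => fun ε _ => hdiff θ ε)
  · obtain ⟨hint, hder⟩ := key
    beta_reduce at hint hder
    have he1 : (fun θ => (fderiv ℝ L (Φ (θ, 0))) (0, h θ, deriv h θ) * F θ)
        = fun θ => (fderiv ℝ L (θ, q θ, deriv q θ)) (0, h θ, deriv h θ) * (t - θ) ^ (α - 1) := by
      funext θ; simp [hΦ, hF]
    have he2 : (fun ε : ℝ => ∫ θ in a..t, L (Φ (θ, ε)) * F θ)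
        = fun ε : ℝ => ∫ θ in a..t,
            L (θ, q θ + ε • h θ, deriv q θ + ε • deriv h θ) * (t - θ) ^ (α - 1) := rfl
    rw [he1] at hint
    rw [he1, he2] at hder
    exact ⟨hder, hint⟩
  · refine Filter.Eventually.of_forall fun θ hθ ε hε => ?_
    have hθK : Φ (θ, ε) ∈ Φ '' (uIcc a t ×ˢ Icc (-1 : ℝ) 1) := by
      refine mem_image_of_mem _ ⟨?_, ?_⟩
      · rw [uIoc_of_le hat.le] at hθ
        rw [uIcc_of_le hat.le]
        exact Ioc_subset_Icc_self hθ
      · have := mem_ball_zero_iff.mp hε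
        rw [Real.norm_eq_abs] at this
        constructor <;> [linarith [neg_abs_le ε]; linarith [le_abs_self ε]]
    have h1 : ‖(fderiv ℝ L (Φ (θ, ε))) (0, h θ, deriv h θ)‖ ≤ C := by
      calc ‖(fderiv ℝ L (Φ (θ, ε))) (0, h θ, deriv h θ)‖
          ≤ ‖fderiv ℝ L (Φ (θ, ε))‖ * ‖((0 : ℝ), h θ, deriv h θ)‖ :=
            ContinuousLinearMap.le_opNorm _ _
        _ ≤ max M 0 * max M2 0 := by
            apply mul_le_mul ((hM _ hθK).trans (le_max_left _ _))
              ((hM2 θ ?_).trans (le_max_left _ _)) (norm_nonneg _)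
              (le_max_right _ _)
            rw [uIoc_of_le hat.le] at hθ
            rw [uIcc_of_le hat.le]
            exact Ioc_subset_Icc_self hθ
    rw [norm_mul, Real.norm_eq_abs (F θ), abs_of_nonneg (hFnn θ hθ)]
    exact mul_le_mul_of_nonneg_right h1 (hFnn θ hθ)

/-- Fractional Euler–Lagrange equation for the first-order FALVA problem:
a critical point of `I[q] = (1/Γ(α)) ∫_a^t L(θ, q θ, q' θ) (t-θ)^(α-1) dθ`
satisfies `∂₂L - d/dθ ∂₃L = ((1-α)/(t-θ)) ∂₃L` on `(a, t)`. -/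
theorem falva_euler_lagrange {n : ℕ}
    (L : ℝ × EuclideanSpace ℝ (Fin n) × EuclideanSpace ℝ (Fin n) → ℝ)
    (hL : ContDiff ℝ 2 L)
    (α a t : ℝ) (hα0 : 0 < α) (hα1 : α ≤ 1) (hat : a < t)
    (q : ℝ → EuclideanSpace ℝ (Fin n)) (hq : ContDiff ℝ 2 q)
    (hcrit : ∀ h : ℝ → EuclideanSpace ℝ (Fin n), ContDiff ℝ 2 h → h a = 0 → h t = 0 →
      deriv (fun ε : ℝ => (1 / Real.Gamma α) * ∫ θ in a..t,
        L (θ, q θ + ε • h θ, deriv q θ + ε • deriv h θ) * (t - θ) ^ (α - 1)) 0 = 0) :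
    ∀ θ ∈ Set.Ioo a t,
      gradient (fun x => L (θ, x, deriv q θ)) (q θ)
        - deriv (fun s => gradient (fun v => L (s, q s, v)) (deriv q s)) θ
      = ((1 - α) / (t - θ)) • gradient (fun v => L (θ, q θ, v)) (deriv q θ) := by
  intro θ₀ hθ₀
  have hL1 : Differentiable ℝ L := hL.differentiable two_ne_zero
  have hdq : ContDiff ℝ 1 (deriv q) := by
    have h2 : ContDiff ℝ (1 + 1 : ℕ) q := by exact_mod_cast hq
    exact (contDiff_succ_iff_deriv.mp (by exact_mod_cast h2)).2.2
  set c : ℝ → ℝ × EuclideanSpace ℝ (Fin n) × EuclideanSpace ℝ (Fin n) :=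
    fun s => (s, q s, deriv q s) with hc
  have hc1 : ContDiff ℝ 1 c := contDiff_id.prodMk ((hq.of_le one_le_two).prodMk hdq)
  have hfd1 : ContDiff ℝ 1 (fderiv ℝ L) := hL.fderiv_right (by norm_num)
  set G2 : ℝ → EuclideanSpace ℝ (Fin n) :=
    fun s => (toDual ℝ _).symm ((fderiv ℝ L (c s)).comp (J2 n)) with hG2
  set G3 : ℝ → EuclideanSpace ℝ (Fin n) :=
    fun s => (toDual ℝ _).symm ((fderiv ℝ L (c s)).comp (J3 n)) with hG3
  have hG2eq : ∀ s, gradient (fun x => L (s, x, deriv q s)) (q s) = G2 s :=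
    fun s => (slice2_hasGradientAt L hL1 s (q s) (deriv q s)).gradient
  have hG3eq : (fun s => gradient (fun v => L (s, q s, v)) (deriv q s)) = G3 :=
    funext fun s => (slice3_hasGradientAt L hL1 s (q s) (deriv q s)).gradient
  have hG2c : Continuous G2 :=
    ((toDual ℝ _).symm.continuous.comp
      (((hfd1.comp hc1).clm_comp contDiff_const).continuous))
  have hG3s : ContDiff ℝ 1 G3 :=
    ((toDual ℝ _).symm.contDiff.comp ((hfd1.comp hc1).clm_comp contDiff_const))
  have hG3d : ∀ s, HasDerivAt G3 (deriv G3 s) s :=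
    fun s => ((hG3s.differentiable one_ne_zero) s).hasDerivAt
  have hG3dc : Continuous (deriv G3) := hG3s.continuous_deriv le_rfl
  -- inner product identities
  have hinner2 : ∀ s v, ⟪G2 s, v⟫_ℝ = (fderiv ℝ L (c s)) (0, v, 0) := by
    intro s v
    rw [hG2]
    rw [toDual_symm_apply]
    simp [J2]
  have hinner3 : ∀ s v, ⟪G3 s, v⟫_ℝ = (fderiv ℝ L (c s)) (0, 0, v) := by
    intro s v
    rw [hG3]
    rw [toDual_symm_apply]
    simp [J3]
  have hG2eq' : gradient (fun x => L (θ₀, x, deriv q θ₀)) (q θ₀) = G2 θ₀ := hG2eq θ₀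
  have hG3eq' : gradient (fun v => L (θ₀, q θ₀, v)) (deriv q θ₀) = G3 θ₀ :=
    congrFun hG3eq θ₀
  rw [hG2eq', hG3eq', hG3eq, ← sub_eq_zero]
  by_contra hwne
  set w : EuclideanSpace ℝ (Fin n) :=
    G2 θ₀ - deriv G3 θ₀ - ((1 - α) / (t - θ₀)) • G3 θ₀ with hw
  -- the weight and the test function machinery
  set F : ℝ → ℝ := fun s => (t - s) ^ (α - 1) with hF
  have htθ₀ : (0 : ℝ) < t - θ₀ := by linarith [hθ₀.2]
  have hFpos : 0 < F θ₀ := Real.rpow_pos_of_pos htθ₀ _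
  set u : ℝ → ℝ := fun s =>
    (⟪G2 s, w⟫_ℝ - ⟪deriv G3 s, w⟫_ℝ - ((1 - α) / (t - s)) * ⟪G3 s, w⟫_ℝ) * F s with hu
  have hu0 : u θ₀ = ⟪w, w⟫_ℝ * F θ₀ := by
    have : ⟪G2 θ₀, w⟫_ℝ - ⟪deriv G3 θ₀, w⟫_ℝ - ((1 - α) / (t - θ₀)) * ⟪G3 θ₀, w⟫_ℝ
        = ⟪w, w⟫_ℝ := by
      nth_rewrite 4 [hw]
      rw [inner_sub_left, inner_sub_left, real_inner_smul_left]
    rw [hu]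
    beta_reduce
    rw [this]
  have hu0pos : 0 < u θ₀ := by
    rw [hu0]
    exact mul_pos (by rw [real_inner_self_eq_norm_sq]; exact pow_pos (norm_pos_iff.mpr hwne) 2) hFpos
  have hucont : ContinuousAt u θ₀ := by
    have hFc : ContinuousAt F θ₀ := by
      have h1 : ContinuousAt (fun x : ℝ => x ^ (α - 1)) (t - θ₀) :=
        Real.continuousAt_rpow_const _ _ (Or.inl htθ₀.ne')
      exact h1.comp ((continuous_const.sub continuous_id).continuousAt)
    have h2 : ContinuousAt (fun s => ⟪G2 s, w⟫_ℝ) θ₀ :=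
      (hG2c.inner continuous_const).continuousAt
    have h3 : ContinuousAt (fun s => ⟪deriv G3 s, w⟫_ℝ) θ₀ :=
      (hG3dc.inner continuous_const).continuousAt
    have h4 : ContinuousAt (fun s => ⟪G3 s, w⟫_ℝ) θ₀ :=
      (hG3s.continuous.inner continuous_const).continuousAt
    have h5 : ContinuousAt (fun s => (1 - α) / (t - s)) θ₀ :=
      (continuousAt_const.div ((continuous_const.sub continuous_id).continuousAt) htθ₀.ne')
    exact ((h2.sub h3).sub (h5.mul h4)).mul hFc
  have hev : ∀ᶠ s in 𝓝 θ₀, u θ₀ / 2 < u s ∧ s ∈ Ioo a t :=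
    (hucont.eventually (eventually_gt_nhds (by linarith))).and (isOpen_Ioo.eventually_mem hθ₀)
  obtain ⟨δ₁, hδ₁pos, hδ₁⟩ := Metric.eventually_nhds_iff.mp hev
  -- the bump function
  set φ : ContDiffBump θ₀ := ⟨δ₁ / 4, δ₁ / 2, by positivity, by linarith⟩ with hφ
  have hφtz : ⇑φ t = 0 := by
    apply φ.zero_of_le_dist
    show δ₁ / 2 ≤ dist t θ₀
    by_contra hlt
    push_neg at hlt
    have := (hδ₁ (show dist t θ₀ < δ₁ by linarith)).2
    exact absurd this.2 (lt_irrefl t)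
  have hφaz : ⇑φ a = 0 := by
    apply φ.zero_of_le_dist
    show δ₁ / 2 ≤ dist a θ₀
    by_contra hlt
    push_neg at hlt
    have := (hδ₁ (show dist a θ₀ < δ₁ by linarith)).2
    exact absurd this.1 (lt_irrefl a)
  have hrOut : φ.rOut = δ₁ / 2 := rfl
  set h : ℝ → EuclideanSpace ℝ (Fin n) := fun s => φ s • w with hhdef
  have hh2 : ContDiff ℝ 2 h := (φ.contDiff).smul contDiff_const
  have hha : h a = 0 := by rw [hhdef]; simp [hφaz]
  have hht : h t = 0 := by rw [hhdef]; simp [hφtz]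
  have hφd : ∀ s, HasDerivAt (⇑φ) (deriv (⇑φ) s) s :=
    fun s => (((φ.contDiff (n := 1)).differentiable one_ne_zero) s).hasDerivAt
  have hhd : ∀ s, HasDerivAt h (deriv (⇑φ) s • w) s :=
    fun s => (hφd s).smul_const w
  have hderivh : deriv h = fun s => deriv (⇑φ) s • w := funext fun s => (hhd s).deriv

  -- first variation vanishes
  obtain ⟨hder, hDint⟩ := first_variation L hL α a t hα0 hat q h hq hh2
  have hΓpos : 0 < Real.Gamma α := Real.Gamma_pos_of_pos hα0
  have hI0 : ∫ θ in a..t, (fderiv ℝ L (θ, q θ, deriv q θ)) (0, h θ, deriv h θ)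
      * (t - θ) ^ (α - 1) = 0 := by
    have hder' := HasDerivAt.const_mul (1 / Real.Gamma α) hder
    have hz := hcrit h hh2 hha hht
    rw [hder'.deriv] at hz
    have h1γ : (1 : ℝ) / Real.Gamma α ≠ 0 := by positivity
    rcases mul_eq_zero.mp hz with h' | h'
    · exact absurd h' h1γ
    · exact h'
  -- expansion of the integrand
  have hDexp : ∀ θ, (fderiv ℝ L (θ, q θ, deriv q θ)) (0, h θ, deriv h θ)
      = φ θ * ⟪G2 θ, w⟫_ℝ + deriv (⇑φ) θ * ⟪G3 θ, w⟫_ℝ := by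
    intro θ
    have e2 : ⟪G2 θ, w⟫_ℝ = (fderiv ℝ L (θ, q θ, deriv q θ)) (0, w, 0) := hinner2 θ w
    have e3 : ⟪G3 θ, w⟫_ℝ = (fderiv ℝ L (θ, q θ, deriv q θ)) (0, 0, w) := hinner3 θ w
    rw [e2, e3, hderivh, hhdef]
    beta_reduce
    have hsplit : ((0 : ℝ), φ θ • w, deriv (⇑φ) θ • w)
        = φ θ • ((0:ℝ), w, (0 : EuclideanSpace ℝ (Fin n)))
          + deriv (⇑φ) θ • ((0:ℝ), (0 : EuclideanSpace ℝ (Fin n)), w) := by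
      simp [Prod.ext_iff]
    rw [hsplit, map_add, ContinuousLinearMap.map_smul, ContinuousLinearMap.map_smul, smul_eq_mul, smul_eq_mul]
  -- zero set machinery near t
  have hUopen : IsOpen {s : ℝ | δ₁ / 2 < dist s θ₀} :=
    isOpen_lt continuous_const (continuous_id.dist continuous_const)
  have hφU : ∀ x ∈ {s : ℝ | δ₁ / 2 < dist s θ₀}, ⇑φ x = 0 :=
    fun x hx => φ.zero_of_le_dist (le_of_lt hx)
  have hdφU : ∀ x ∈ {s : ℝ | δ₁ / 2 < dist s θ₀}, deriv (⇑φ) x = 0 := by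
    intro x hx
    have hev0 : ⇑φ =ᶠ[𝓝 x] (fun _ => (0:ℝ)) :=
      (hUopen.eventually_mem hx).mono fun y hy => hφU y hy
    rw [Filter.EventuallyEq.deriv_eq hev0]
    simp
  have hUt : t ∈ {s : ℝ | δ₁ / 2 < dist s θ₀} := by
    simp only [mem_setOf_eq]
    by_contra hlt
    push_neg at hlt
    exact absurd (hδ₁ (show dist t θ₀ < δ₁ by linarith)).2.2 (lt_irrefl t)
  have hφderiv_t : deriv (⇑φ) t = 0 := hdφU t hUt
  -- the function to integrate by parts
  set ψ : ℝ → ℝ := fun s => ⟪G3 s, w⟫_ℝ * F s with hψ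
  set V : ℝ → ℝ := fun s => deriv (⇑φ) s * ψ s
      + φ s * (⟪deriv G3 s, w⟫_ℝ * F s + ⟪G3 s, w⟫_ℝ * (((1 - α) / (t - s)) * F s)) with hV
  have hFd : ∀ s, s < t → HasDerivAt F (((1 - α) / (t - s)) * F s) s := by
    intro s hs
    have hts : (0:ℝ) < t - s := by linarith
    have h1 : HasDerivAt (fun s' : ℝ => t - s') (-1) s := by
      simpa using (hasDerivAt_id s).const_sub t
    have h2 : HasDerivAt (fun x : ℝ => x ^ (α - 1))
        ((α - 1) * (t - s) ^ (α - 1 - 1)) (t - s) :=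
      Real.hasDerivAt_rpow_const (Or.inl hts.ne')
    have h3 := h2.comp s h1
    have heq : (α - 1) * (t - s) ^ (α - 1 - 1) * (-1) = ((1 - α) / (t - s)) * F s := by
      rw [hF]
      beta_reduce
      rw [show α - 1 - 1 = α - 1 + (-1) by ring, Real.rpow_add hts, Real.rpow_neg_one]
      field_simp
      ring
    rw [heq] at h3
    exact h3
  have hψd : ∀ s, s < t → HasDerivAt ψ
      (⟪deriv G3 s, w⟫_ℝ * F s + ⟪G3 s, w⟫_ℝ * (((1 - α) / (t - s)) * F s)) s := by
    intro s hs
    have hi : HasDerivAt (fun s' => ⟪G3 s', w⟫_ℝ) ⟪deriv G3 s, w⟫_ℝ s := by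
      simpa using HasDerivAt.inner ℝ (hG3d s) (hasDerivAt_const s w)
    exact hi.mul (hFd s hs)
  have hVd : ∀ s ∈ uIcc a t, HasDerivAt (fun s' => φ s' * ψ s') (V s) s := by
    intro s hs
    rcases lt_or_ge s t with hst | hst
    · exact (hφd s).mul (hψd s hst)
    · have hseq : s = t := le_antisymm (by rw [uIcc_of_le hat.le] at hs; exact hs.2) hst
      subst hseq
      have hfz : (fun s' => φ s' * ψ s') =ᶠ[𝓝 s] (fun _ => (0:ℝ)) :=
        (hUopen.eventually_mem hUt).mono fun x hx => by simp [hφU x hx]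
      have h0 : HasDerivAt (fun s' => φ s' * ψ s') 0 s :=
        (hasDerivAt_const s (0:ℝ)).congr_of_eventuallyEq hfz
      have hV0 : V s = 0 := by
        rw [hV]
        beta_reduce
        rw [hφderiv_t, hφU s hUt]
        ring
      rw [hV0]
      exact h0
  have hVint : IntervalIntegrable V volume a t := by
    apply ContinuousOn.intervalIntegrable
    intro s hs
    rcases lt_or_ge s t with hst | hst
    · apply ContinuousAt.continuousWithinAt
      have hts : (0:ℝ) < t - s := by linarith
      have hFc : ContinuousAt F s :=
        (Real.continuousAt_rpow_const _ _ (Or.inl hts.ne')).comp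
          ((continuous_const.sub continuous_id).continuousAt)
      have hdφc : Continuous (deriv (⇑φ)) := (φ.contDiff (n := 2)).continuous_deriv one_le_two
      have h3c : ContinuousAt (fun s' => ⟪G3 s', w⟫_ℝ) s :=
        (hG3s.continuous.inner continuous_const).continuousAt
      have h3dc : ContinuousAt (fun s' => ⟪deriv G3 s', w⟫_ℝ) s :=
        (hG3dc.inner continuous_const).continuousAt
      have hdiv : ContinuousAt (fun s' => (1 - α) / (t - s')) s :=
        continuousAt_const.div ((continuous_const.sub continuous_id).continuousAt) hts.ne'
      exact ((hdφc.continuousAt).mul (h3c.mul hFc)).add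
        ((φ.continuous.continuousAt).mul
          ((h3dc.mul hFc).add (h3c.mul (hdiv.mul hFc))))
    · have hseq : s = t := le_antisymm (by rw [uIcc_of_le hat.le] at hs; exact hs.2) hst
      subst hseq
      apply ContinuousAt.continuousWithinAt
      have hVz : V =ᶠ[𝓝 s] (fun _ => (0:ℝ)) :=
        (hUopen.eventually_mem hUt).mono fun x hx => by
          rw [hV]
          beta_reduce
          rw [hdφU x hx, hφU x hx]
          ring
      exact hVz.continuousAt
  have hFTC : ∫ s in a..t, V s = 0 := by
    rw [integral_eq_sub_of_hasDerivAt hVd hVint]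
    rw [hφtz, hφaz]
    ring
  -- combine
  have hcomb : (fun θ => φ θ * u θ)
      = fun θ => (fderiv ℝ L (θ, q θ, deriv q θ)) (0, h θ, deriv h θ)
          * (t - θ) ^ (α - 1) - V θ := by
    funext θ
    rw [hDexp θ, hV, hψ, hu, hF]
    beta_reduce
    ring
  have hintφu : ∫ θ in a..t, φ θ * u θ = 0 := by
    rw [hcomb, integral_sub hDint hVint, hI0, hFTC, sub_zero]
  -- positivity of the integral
  have hsupp_sub : Function.support (⇑φ) ⊆ Ioc a t := by
    rw [φ.support_eq]
    intro x hx
    have hxd : dist x θ₀ < δ₁ := by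
      have := mem_ball.mp hx; rw [hrOut] at this; linarith
    exact Ioo_subset_Ioc_self (hδ₁ hxd).2
  have hφpos : 0 < ∫ θ in a..t, ⇑φ θ := by
    rw [integral_eq_integral_of_support_subset hsupp_sub]
    exact φ.integral_pos
  have hφuint : IntervalIntegrable (fun θ => φ θ * u θ) volume a t := by
    rw [hcomb]
    exact hDint.sub hVint
  have hmono : u θ₀ / 2 * ∫ θ in a..t, ⇑φ θ ≤ ∫ θ in a..t, φ θ * u θ := by
    rw [← intervalIntegral.integral_const_mul]
    apply integral_mono_on hat.le ((continuous_const.mul φ.continuous).intervalIntegrable a t) hφuint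
    intro x hx
    rcases eq_or_ne (φ x) 0 with hz | hz
    · simp [hz]
    · have hxb : x ∈ Metric.ball θ₀ (δ₁ / 2) := by
        rw [← φ.support_eq]; exact hz
      have hxd : dist x θ₀ < δ₁ := by
        have := mem_ball.mp hxb; linarith
      have hux := (hδ₁ hxd).1
      calc u θ₀ / 2 * φ x ≤ u x * φ x :=
            mul_le_mul_of_nonneg_right hux.le φ.nonneg
        _ = φ x * u x := mul_comm _ _
  have hfin : 0 < u θ₀ / 2 * ∫ θ in a..t, ⇑φ θ :=
    mul_pos (half_pos hu0pos) hφpos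
  linarith [hmono, hfin, hintφu.ge, hintφu.le]
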